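/- Fix natural numbers m and i ≤ m, a real a with 0 < a < 1, and define, for N > m, p(N) = 1 - (1 - a)^(1 / c_l(N)) where c_i(N) = binomial(N - m, m - i), and p_k(N) = 1 - (1 - p(N))^(c_k(N)). Then for any k > l (with k ≤ m), p_k(N) → 0 as N → ∞. -/

import Mathlib

open Filter Real

/-- `n.choose d → ∞` as `n → ∞`, for `d ≥ 1`, in the reals. -/
lemma choose_tendsto_atTop (d : ℕ) (hd : 1 ≤ d) :
    Tendsto (fun n : ℕ => (n.choose d : ℝ)) atTop atTop := by
  have h1 : Tendsto (fun n : ℕ => ((n + 1 - d : ℕ) : ℝ) / (Nat.factorial d : ℝ)) atTop atTop := by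
    apply Tendsto.atTop_div_const (by positivity)
    apply tendsto_natCast_atTop_atTop.comp
    exact tendsto_atTop_atTop.mpr (fun b => ⟨b + d, fun n hn => by omega⟩)
  apply tendsto_atTop_mono' _ _ h1
  filter_upwards [eventually_ge_atTop d] with n hn
  calc ((n + 1 - d : ℕ) : ℝ) / (Nat.factorial d : ℝ)
      ≤ ((n + 1 - d : ℕ) ^ d : ℝ) / (Nat.factorial d : ℝ) := by
        apply div_le_div_of_nonneg_right _ (by positivity)
        · push_cast
          exact le_self_pow₀ (by exact_mod_cast Nat.one_le_iff_ne_zero.mpr (by omega)) (by omega)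
    _ ≤ (n.choose d : ℝ) := by
        have := Nat.pow_le_choose (α := ℝ) d n
        push_cast at this ⊢
        exact this

/-- The ratio of binomial coefficients tends to 0 when `r < s`. -/
lemma choose_ratio_tendsto_zero (r s : ℕ) (hrs : r < s) :
    Tendsto (fun n : ℕ => (n.choose r : ℝ) / (n.choose s : ℝ)) atTop (nhds 0) := by
  have key : ∀ᶠ n : ℕ in atTop,
      (n.choose r : ℝ) / (n.choose s : ℝ)
        = (s.choose r : ℝ) / ((n - r).choose (s - r) : ℝ) := by
    filter_upwards [eventually_ge_atTop s] with n hn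
    have hid := Nat.choose_mul (n := n) (k := s) (s := r) hrs.le
    have h1 : (n.choose s : ℝ) ≠ 0 := Nat.cast_ne_zero.mpr (Nat.choose_pos hn).ne'
    have h2 : (((n - r).choose (s - r)) : ℝ) ≠ 0 :=
      Nat.cast_ne_zero.mpr (Nat.choose_pos (by omega : s - r ≤ n - r)).ne'
    have hid' : (n.choose s : ℝ) * (s.choose r : ℝ)
        = (n.choose r : ℝ) * ((n - r).choose (s - r) : ℝ) := by exact_mod_cast hid
    field_simp
    linarith [hid']
  refine Tendsto.congr' (key.mono fun n h => h.symm) ?_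
  apply Tendsto.div_atTop (tendsto_const_nhds)
  exact (choose_tendsto_atTop (s - r) (by omega)).comp
    (tendsto_atTop_atTop.mpr (fun b => ⟨b + r, fun n hn => by omega⟩) :
      Tendsto (fun n : ℕ => n - r) atTop atTop)

theorem stmt_3 (m l k : ℕ) (hlm : l ≤ m) (hlk : l < k) (hkm : k ≤ m)
    (a : ℝ) (ha0 : 0 < a) (ha1 : a < 1) :
    Tendsto (fun N : ℕ =>
        1 - (1 - a) ^ (((N - m).choose (m - k) : ℝ) / ((N - m).choose (m - l) : ℝ)))
      atTop (nhds 0) := by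
  have hb : (0 : ℝ) < 1 - a := by linarith
  have hratio : Tendsto (fun N : ℕ =>
      ((N - m).choose (m - k) : ℝ) / ((N - m).choose (m - l) : ℝ)) atTop (nhds 0) := by
    exact (choose_ratio_tendsto_zero (m - k) (m - l) (by omega)).comp
      (tendsto_atTop_atTop.mpr (fun b => ⟨b + m, fun n hn => by omega⟩) :
        Tendsto (fun N : ℕ => N - m) atTop atTop)
  have hcont : ContinuousAt (fun x : ℝ => (1 - a) ^ x) 0 :=
    Real.continuousAt_const_rpow hb.ne'
  have h1 : Tendsto (fun N : ℕ =>
      (1 - a) ^ (((N - m).choose (m - k) : ℝ) / ((N - m).choose (m - l) : ℝ)))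
      atTop (nhds 1) := by
    have := hcont.tendsto.comp hratio
    simpa [Real.rpow_zero, Function.comp_def] using this
  have := (tendsto_const_nhds : Tendsto (fun _ : ℕ => (1:ℝ)) atTop (nhds 1)).sub h1
  simpa using this
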